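/- Let w : ℝ × ℝ → ℂ be continuous and bounded, and 2π-periodic in its first variable: w(x + 2π, k) = w(x, k) for all x, k ∈ ℝ. Let f ∈ L¹(ℝ; ℂ). Then the function φ(x) = ∫_ℝ f(k) e^{ikx} w(x, k) dk tends to 0 as |x| → ∞. -/

import Mathlib

open MeasureTheory Filter

lemma exp_norm_one (k x : ℝ) : ‖Complex.exp (Complex.I * k * x)‖ = 1 := by
  have : Complex.I * k * x = ((k*x : ℝ) : ℂ) * Complex.I := by push_cast; ring
  rw [this, Complex.norm_exp_ofReal_mul_I]

lemma wc_integrable (w : ℝ → ℝ → ℂ) (hw_cont : Continuous fun q : ℝ × ℝ => w q.1 q.2)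
    {M : ℝ} (hM : ∀ x k : ℝ, ‖w x k‖ ≤ M) (f : ℝ → ℂ) (hf : Integrable f) (x : ℝ) :
    Integrable fun k : ℝ => f k * Complex.exp (Complex.I * k * x) * w x k := by
  have hc : Continuous fun k : ℝ => Complex.exp (Complex.I * k * x) * w x k := by
    apply Continuous.mul
    · exact Complex.continuous_exp.comp (by continuity)
    · exact hw_cont.comp (continuous_const.prodMk continuous_id)
  have h1 : Integrable fun k : ℝ => (Complex.exp (Complex.I * k * x) * w x k) * f k := by
    refine hf.bdd_mul (c := M) hc.aestronglyMeasurable (Filter.Eventually.of_forall fun k => ?_)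
    rw [norm_mul, exp_norm_one, one_mul]
    exact hM x k
  have : (fun k : ℝ => f k * Complex.exp (Complex.I * k * x) * w x k)
      = fun k : ℝ => (Complex.exp (Complex.I * k * x) * w x k) * f k := by
    funext k; ring
  rw [this]; exact h1

lemma wc_unif (w : ℝ → ℝ → ℂ) (hw_cont : Continuous fun q : ℝ × ℝ => w q.1 q.2)
    (hw_per : ∀ x k : ℝ, w (x + 2 * Real.pi) k = w x k) (ε R : ℝ) (hε : 0 < ε) :
    ∃ δ > 0, ∀ x k k' : ℝ, |k| ≤ R → |k'| ≤ R → |k - k'| < δ → ‖w x k - w x k'‖ < ε := by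
  have hK : IsCompact (Set.Icc (0:ℝ) (2*Real.pi) ×ˢ Set.Icc (-R) R) :=
    isCompact_Icc.prod isCompact_Icc
  have hUC := hK.uniformContinuousOn_of_continuous hw_cont.continuousOn
  rw [Metric.uniformContinuousOn_iff] at hUC
  obtain ⟨δ, hδ, h⟩ := hUC ε hε
  refine ⟨δ, hδ, fun x k k' hk hk' hkk => ?_⟩
  set n : ℤ := ⌊x / (2*Real.pi)⌋ with hn
  set y : ℝ := x - n * (2*Real.pi) with hy
  have htp : (0:ℝ) < 2*Real.pi := by positivity
  have hxy : ∀ m : ℝ, w x m = w y m := by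
    intro m
    have hper : Function.Periodic (fun t => w t m) (2*Real.pi) := fun t => hw_per t m
    exact (hper.sub_int_mul_eq n).symm
  have h1 : (n:ℝ) ≤ x / (2*Real.pi) := Int.floor_le _
  have h2 : x / (2*Real.pi) < n + 1 := Int.lt_floor_add_one _
  rw [le_div_iff₀ htp] at h1
  rw [div_lt_iff₀ htp] at h2
  have hyI : y ∈ Set.Icc (0:ℝ) (2*Real.pi) := by
    constructor <;> [skip; skip] <;> simp only [hy] <;> nlinarith
  rw [hxy k, hxy k']
  have hd : dist ((y, k) : ℝ × ℝ) (y, k') < δ := by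
    rw [Prod.dist_eq]
    rw [dist_self, max_eq_right dist_nonneg, Real.dist_eq]
    exact hkk
  have := h (y, k) ⟨hyI, by simpa [Set.mem_Icc, abs_le] using hk⟩
    (y, k') ⟨hyI, by simpa [Set.mem_Icc, abs_le] using hk'⟩ hd
  rwa [dist_eq_norm] at this

lemma wc_core (w : ℝ → ℝ → ℂ) (hw_cont : Continuous fun q : ℝ × ℝ => w q.1 q.2)
    {M : ℝ} (hM : ∀ x k : ℝ, ‖w x k‖ ≤ M) (hM0 : 0 ≤ M)
    (hw_per : ∀ x k : ℝ, w (x + 2 * Real.pi) k = w x k)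
    (g : ℝ → ℂ) (hg_cont : Continuous g) (hg_supp : HasCompactSupport g) :
    Tendsto (fun x : ℝ => ∫ k : ℝ, g k * Complex.exp (Complex.I * k * x) * w x k)
      (cocompact ℝ) (nhds 0) := by
  have hg_int : Integrable g := hg_cont.integrable_of_hasCompactSupport hg_supp
  obtain ⟨G, hG⟩ := hg_cont.bounded_above_of_compact_support hg_supp
  have hG0 : 0 ≤ G := le_trans (norm_nonneg _) (hG 0)
  obtain ⟨R₀, hR₀⟩ := hg_supp.isBounded.subset_closedBall 0
  set R : ℝ := max R₀ 0 with hRdef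
  have hR0 : 0 ≤ R := le_max_right _ _
  have hgz : ∀ k : ℝ, R < |k| → g k = 0 := by
    intro k hk
    apply image_eq_zero_of_notMem_tsupport
    intro hmem
    have h1 := hR₀ hmem
    rw [Metric.mem_closedBall, Real.dist_eq, sub_zero] at h1
    have : |k| ≤ R := le_trans h1 (le_max_left _ _)
    linarith
  rw [NormedAddCommGroup.tendsto_nhds_zero]
  intro ε hε
  set ε' : ℝ := ε / ((M + G + 1) * (2 * R + 2)) with hε'def
  have hden : (0:ℝ) < (M + G + 1) * (2 * R + 2) := by positivity
  have hε' : 0 < ε' := div_pos hε hden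
  have hgUC := Metric.uniformContinuous_iff.mp
    (hg_cont.uniformContinuous_of_tendsto_cocompact hg_supp.is_zero_at_infty)
  obtain ⟨δ₁, hδ₁, hgU⟩ := hgUC ε' hε'
  obtain ⟨δ₂, hδ₂, hwU⟩ := wc_unif w hw_cont hw_per ε' (R + 2) hε'
  set δm : ℝ := min δ₁ (min δ₂ 1) with hδmdef
  have hδm0 : 0 < δm := lt_min hδ₁ (lt_min hδ₂ one_pos)
  have hδm1 : δm ≤ 1 := le_trans (min_le_right _ _) (min_le_right _ _)
  set T : ℝ := Real.pi / δm + 1 with hTdef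
  have hTpos : 0 < T := by positivity
  filter_upwards [tendsto_norm_cocompact_atTop.eventually_ge_atTop T] with x hx
  have hxT : T ≤ |x| := by rwa [Real.norm_eq_abs] at hx
  have hxpos : 0 < |x| := lt_of_lt_of_le hTpos hxT
  have hx0 : x ≠ 0 := by
    intro h; rw [h, abs_zero] at hxpos; exact lt_irrefl _ hxpos
  set δ : ℝ := Real.pi / x with hδdef
  have hδabs : |δ| < δm := by
    rw [hδdef, abs_div, abs_of_pos Real.pi_pos, div_lt_iff₀ hxpos]
    have hmul : δm * (Real.pi / δm) = Real.pi := mul_div_cancel₀ _ (ne_of_gt hδm0)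
    have h5 : δm * T = Real.pi + δm := by rw [hTdef, mul_add, hmul, mul_one]
    nlinarith [mul_le_mul_of_nonneg_left hxT hδm0.le, h5, hδm0]
  have hδ1 : |δ| ≤ 1 := le_trans hδabs.le hδm1
  set F : ℝ → ℂ := fun k => g k * Complex.exp (Complex.I * k * x) * w x k with hFdef
  set Fs : ℝ → ℂ := fun k => g (k + δ) * Complex.exp (Complex.I * k * x) * w x (k + δ)
    with hFsdef
  have hF : Integrable F := wc_integrable w hw_cont hM g hg_int x
  have hδx : δ * x = Real.pi := div_mul_cancel₀ _ hx0
  have hexp : ∀ k : ℝ, Complex.exp (Complex.I * ↑(k + δ) * x)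
      = -Complex.exp (Complex.I * k * x) := by
    intro k
    have hC : (δ:ℂ) * (x:ℂ) = (Real.pi:ℂ) := by exact_mod_cast congrArg Complex.ofReal hδx
    have heq : Complex.I * ↑(k + δ) * ↑x = Complex.I * ↑k * ↑x + ↑Real.pi * Complex.I := by
      push_cast
      linear_combination Complex.I * hC
    rw [heq, Complex.exp_add, Complex.exp_pi_mul_I, mul_neg_one]
  have hFsneg : Fs = fun k => -F (k + δ) := by
    funext k
    simp only [hFsdef, hFdef]
    rw [hexp k]; ring
  have hFs : Integrable Fs := by
    rw [hFsneg]; exact (hF.comp_add_right δ).neg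
  have hshift : ∫ k : ℝ, F (k + δ) = ∫ k : ℝ, F k := integral_add_right_eq_self F δ
  have hFsval : ∫ k, Fs k = -∫ k, F k := by
    rw [hFsneg, integral_neg, hshift]
  have h2x : ∫ k, (F k - Fs k) = (2:ℂ) * ∫ k, F k := by
    rw [integral_sub hF hFs, hFsval]; ring
  -- pointwise bound
  set S : Set ℝ := Set.Icc (-(R + 1)) (R + 1) with hSdef
  have hptwise : ∀ k : ℝ, ‖F k - Fs k‖ ≤ S.indicator (fun _ => M * ε' + G * ε') k := by
    intro k
    have hnorm : ‖F k - Fs k‖ = ‖g k * w x k - g (k + δ) * w x (k + δ)‖ := by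
      rw [show F k - Fs k
          = (g k * w x k - g (k + δ) * w x (k + δ)) * Complex.exp (Complex.I * k * x) by
        simp only [hFdef, hFsdef]; ring]
      rw [norm_mul, exp_norm_one, mul_one]
    have hdistk : dist k (k + δ) = |δ| := by
      rw [Real.dist_eq]; simp [abs_neg]
    by_cases hk : |k| ≤ R + 1
    · rw [Set.indicator_of_mem (by rw [hSdef, Set.mem_Icc, ← abs_le]; exact hk)]
      have e1 : ‖g k - g (k + δ)‖ < ε' := by
        have := hgU (show dist k (k + δ) < δ₁ by
          rw [hdistk]; exact lt_of_lt_of_le hδabs (min_le_left _ _))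
        rwa [dist_eq_norm] at this
      have e2 : ‖w x k - w x (k + δ)‖ < ε' := by
        refine hwU x k (k + δ) (by linarith) ?_ ?_
        · have := abs_add_le k δ
          linarith
        · have : |k - (k + δ)| = |δ| := by simp [abs_neg]
          rw [this]
          exact lt_of_lt_of_le hδabs (le_trans (min_le_right _ _) (min_le_left _ _))
      rw [hnorm]
      calc ‖g k * w x k - g (k + δ) * w x (k + δ)‖
          = ‖(g k - g (k + δ)) * w x k + g (k + δ) * (w x k - w x (k + δ))‖ := by
            rw [show g k * w x k - g (k + δ) * w x (k + δ)
              = (g k - g (k + δ)) * w x k + g (k + δ) * (w x k - w x (k + δ)) by ring]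
        _ ≤ ‖(g k - g (k + δ)) * w x k‖ + ‖g (k + δ) * (w x k - w x (k + δ))‖ :=
            norm_add_le _ _
        _ = ‖g k - g (k + δ)‖ * ‖w x k‖ + ‖g (k + δ)‖ * ‖w x k - w x (k + δ)‖ := by
            rw [norm_mul, norm_mul]
        _ ≤ ε' * M + G * ε' :=
            add_le_add (mul_le_mul e1.le (hM x k) (norm_nonneg _) hε'.le)
              (mul_le_mul (hG _) e2.le (norm_nonneg _) hG0)
        _ = M * ε' + G * ε' := by ring
    · rw [Set.indicator_of_notMem (by rw [hSdef, Set.mem_Icc, ← abs_le]; exact hk)]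
      push_neg at hk
      have hz1 : g k = 0 := hgz k (by linarith)
      have hz2 : g (k + δ) = 0 := by
        apply hgz
        have h1 : |k| - |k + δ| ≤ |k - (k + δ)| := abs_sub_abs_le_abs_sub _ _
        have h2 : |k - (k + δ)| = |δ| := by simp [abs_neg]
        rw [h2] at h1
        linarith
      rw [hnorm, hz1, hz2]
      simp
  have hSmeas : MeasurableSet S := measurableSet_Icc
  have hInd : Integrable (S.indicator fun _ : ℝ => M * ε' + G * ε') := by
    rw [integrable_indicator_iff hSmeas]
    refine integrableOn_const ?_ ?_
    · rw [hSdef, Real.volume_Icc]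
      exact ENNReal.ofReal_ne_top
    · exact enorm_ne_top
  have hintle : (∫ k, ‖F k - Fs k‖) ≤ (M * ε' + G * ε') * (2 * R + 2) := by
    have h1 : (∫ k, ‖F k - Fs k‖) ≤ ∫ k, S.indicator (fun _ => M * ε' + G * ε') k :=
      integral_mono (hF.sub hFs).norm hInd hptwise
    have h2 : (∫ k, S.indicator (fun _ => M * ε' + G * ε') k)
        = (M * ε' + G * ε') * (2 * R + 2) := by
      rw [integral_indicator_const _ hSmeas, hSdef, Real.volume_real_Icc_of_le (by linarith), smul_eq_mul]
      ring_nf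
    linarith
  have hfinal : ‖∫ k, F k‖ ≤ (M * ε' + G * ε') * (2 * R + 2) / 2 := by
    have h1 : ‖∫ k, (F k - Fs k)‖ = 2 * ‖∫ k, F k‖ := by
      rw [h2x, norm_mul]
      norm_num
    have h2 : ‖∫ k, (F k - Fs k)‖ ≤ ∫ k, ‖F k - Fs k‖ := norm_integral_le_integral_norm _
    linarith
  have hεε : ε' * ((M + G + 1) * (2 * R + 2)) = ε := div_mul_cancel₀ _ (ne_of_gt hden)
  show ‖∫ k : ℝ, F k‖ < ε
  calc ‖∫ k : ℝ, F k‖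
      ≤ (M * ε' + G * ε') * (2 * R + 2) / 2 := hfinal
    _ < ε := by nlinarith [hε', hR0, hε]

/-- Riemann–Lebesgue type decay for Fourier-type integrals with a
continuous, bounded, `2π`-periodically modulated amplitude `w(x,k)`. -/
theorem riemann_lebesgue_bloch_decay
    (w : ℝ → ℝ → ℂ)
    (hw_cont : Continuous fun q : ℝ × ℝ => w q.1 q.2)
    (hw_bdd : ∃ M : ℝ, ∀ x k : ℝ, ‖w x k‖ ≤ M)
    (hw_per : ∀ x k : ℝ, w (x + 2 * Real.pi) k = w x k)
    (f : ℝ → ℂ) (hf : Integrable f) :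
    Tendsto (fun x : ℝ => ∫ k : ℝ, f k * Complex.exp (Complex.I * k * x) * w x k)
      (cocompact ℝ) (nhds 0) := by
  obtain ⟨M₀, hM₀⟩ := hw_bdd
  set M : ℝ := max M₀ 0 with hMdef
  have hM : ∀ x k : ℝ, ‖w x k‖ ≤ M := fun x k => le_trans (hM₀ x k) (le_max_left _ _)
  have hM0 : 0 ≤ M := le_max_right _ _
  rw [NormedAddCommGroup.tendsto_nhds_zero]
  intro ε hε
  have hε2 : 0 < ε / (2 * (M + 1)) := by positivity
  obtain ⟨g, hg_supp, hfg, hg_cont, hg_int⟩ :=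
    hf.exists_hasCompactSupport_integral_sub_le hε2
  have hcore := wc_core w hw_cont hM hM0 hw_per g hg_cont hg_supp
  have hev := NormedAddCommGroup.tendsto_nhds_zero.mp hcore (ε / 2) (by positivity)
  filter_upwards [hev] with x hx
  set F : ℝ → ℂ := fun k => f k * Complex.exp (Complex.I * k * x) * w x k with hFdef
  set Gf : ℝ → ℂ := fun k => g k * Complex.exp (Complex.I * k * x) * w x k with hGdef
  have hFint : Integrable F := wc_integrable w hw_cont hM f hf x
  have hGint : Integrable Gf := wc_integrable w hw_cont hM g hg_int x
  have hdiff : Integrable (fun k => F k - Gf k) := hFint.sub hGint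
  have hdiffeq : (fun k : ℝ => F k - Gf k)
      = fun k : ℝ => (f k - g k) * Complex.exp (Complex.I * k * x) * w x k := by
    funext k; simp only [hFdef, hGdef]; ring
  have hbound : ‖∫ k, F k - Gf k‖ ≤ M * (ε / (2 * (M + 1))) := by
    have h1 : ‖∫ k, F k - Gf k‖ ≤ ∫ k, ‖F k - Gf k‖ := norm_integral_le_integral_norm _
    have h2 : ∀ k : ℝ, ‖F k - Gf k‖ ≤ ‖f k - g k‖ * M := by
      intro k
      rw [congrFun hdiffeq k, norm_mul, norm_mul, exp_norm_one, mul_one]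
      exact mul_le_mul_of_nonneg_left (hM x k) (norm_nonneg _)
    have h3 : (∫ k, ‖F k - Gf k‖) ≤ ∫ k, ‖f k - g k‖ * M :=
      integral_mono hdiff.norm (((hf.sub hg_int).norm).mul_const M) h2
    have h4 : (∫ k, ‖f k - g k‖ * M) = (∫ k, ‖f k - g k‖) * M := integral_mul_const _ _
    have h5 : (∫ k, ‖f k - g k‖) * M ≤ (ε / (2 * (M + 1))) * M :=
      mul_le_mul_of_nonneg_right hfg hM0
    calc ‖∫ k, F k - Gf k‖ ≤ ∫ k, ‖F k - Gf k‖ := h1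
      _ ≤ ∫ k, ‖f k - g k‖ * M := h3
      _ = (∫ k, ‖f k - g k‖) * M := h4
      _ ≤ (ε / (2 * (M + 1))) * M := h5
      _ = M * (ε / (2 * (M + 1))) := by ring
  have hsplit : (∫ k, F k) = (∫ k, Gf k) + ∫ k, F k - Gf k := by
    rw [integral_sub hFint hGint]; ring
  have hMε : M * (ε / (2 * (M + 1))) < ε / 2 := by
    have hd : (ε / (2 * (M + 1))) * (2 * (M + 1)) = ε :=
      div_mul_cancel₀ _ (by positivity)
    nlinarith [hε2, hd, hM0]
  show ‖∫ k : ℝ, F k‖ < ε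
  calc ‖∫ k, F k‖ = ‖(∫ k, Gf k) + ∫ k, F k - Gf k‖ := by rw [← hsplit]
    _ ≤ ‖∫ k, Gf k‖ + ‖∫ k, F k - Gf k‖ := norm_add_le _ _
    _ < ε / 2 + ε / 2 := add_lt_add_of_lt_of_le hx (hbound.trans hMε.le)
    _ = ε := by ring
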